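/- There exists a simplicial \(\mathbb{Z}_2\)-map \(\lambda : \operatorname{sd}(\mathsf{B}(K_{d+1})) \to \partial \Diamond^d\) from the first barycentric subdivision of the box complex of the complete graph \(K_{d+1}\) to the boundary of the \(d\)-dimensional cross-polytope, defined as follows: identify \(V(K_{d+1})\) with \(\{1, \dots, d+1\}\) and signed vertices with \(\{\pm 1, \dots, \pm(d+1)\}\); for a vertex \(v\) set \(\mu(v) = (-1)^v v\); for a simplex \(\sigma\) of \(\mathsf{B}(K_{d+1})\) with vertices \(v_0, \dots, v_{\dim \sigma}\) ordered by increasing absolute value, let \(k\) be one plus the number of sign changes in \(\mu(v_0), \dots, \mu(v_{\dim\sigma})\) and \(s\) the sign of \(\mu(v_0)\); then \(\lambda(\sigma) = s\, e_k\) is well-defined (\(k \in \{1, \dots, d\}\)), simplicial, and commutes with the \(\mathbb{Z}_2\)-actions. -/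

import Mathlib

/-- The simplices of `B(K_{d+1})`: sets of signed vertices (signed elements of
`{1, …, d+1}`, a vertex `(b, i)` standing for `±(i+1)`) containing no antipodal
pair, whose positive part is not everything and whose negative part is not
everything. -/
def BKSimplex (d : ℕ) (σ : Finset (Bool × Fin (d + 1))) : Prop :=
  (∀ i : Fin (d + 1), ¬((true, i) ∈ σ ∧ (false, i) ∈ σ)) ∧
  (∃ i : Fin (d + 1), (true, i) ∉ σ) ∧
  (∃ i : Fin (d + 1), (false, i) ∉ σ)

/-- The sign of `μ(v) = (-1)^v · v` for the signed vertex `p = (b, i)`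
representing `±(i+1)`: `true` iff `μ(v) > 0`. -/
def muSign (d : ℕ) (p : Bool × Fin (d + 1)) : Bool :=
  p.1 == decide ((p.2.val + 1) % 2 = 0)

/-- The number of sign changes in a list of signs. -/
def signChanges : List Bool → ℕ
  | [] => 0
  | [_] => 0
  | a :: b :: t => (if a = b then 0 else 1) + signChanges (b :: t)

/-- The list of signs `μ(v₀), μ(v₁), …` of the vertices of a simplex `σ`,
ordered by increasing absolute value. -/
def signList (d : ℕ) (σ : Finset (Bool × Fin (d + 1))) : List Bool :=
  ((σ.image Prod.snd).sort (· ≤ ·)).map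
    (fun i => muSign d (decide ((true, i) ∈ σ), i))


lemma sc_cons_cons (a b : Bool) (t : List Bool) :
    signChanges (a :: b :: t) = (if a = b then 0 else 1) + signChanges (b :: t) := rfl

lemma sc_cons_le (a b : Bool) (l : List Bool) :
    signChanges (a :: l) ≤ 1 + signChanges (b :: l) := by
  cases l with
  | nil => simp [signChanges]
  | cons c t => simp only [sc_cons_cons]; split <;> split <;> omega

lemma sc_sublist (a : Bool) {l l' : List Bool} (h : l.Sublist l') :
    signChanges (a :: l) ≤ signChanges (a :: l') := by
  induction h generalizing a with
  | slnil => exact le_refl _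
  | cons b hsub ih =>
    refine (ih a).trans ?_
    rw [sc_cons_cons]
    split
    · next h => subst h; simp
    · exact sc_cons_le a b _
  | cons_cons b hsub ih =>
    rw [sc_cons_cons, sc_cons_cons]
    exact Nat.add_le_add_left (ih b) _

lemma sc_lt_length {l : List Bool} (h : l ≠ []) : signChanges l + 1 ≤ l.length := by
  induction l with
  | nil => simp at h
  | cons a t ih =>
    cases t with
    | nil => simp [signChanges]
    | cons b t2 =>
      rw [sc_cons_cons]
      have := ih (by simp)
      simp only [List.length_cons] at *
      split <;> omega

lemma sc_eq_length {l : List Bool} (h : signChanges l + 1 = l.length) :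
    l.Chain' (· ≠ ·) := by
  induction l with
  | nil => exact List.isChain_nil
  | cons a t ih =>
    cases t with
    | nil => exact List.isChain_singleton _
    | cons b t2 =>
      rw [sc_cons_cons] at h
      have h2 := sc_lt_length (l := b :: t2) (by simp)
      simp only [List.length_cons] at *
      unfold List.Chain'; rw [List.isChain_cons_cons]
      split at h
      · omega
      · exact ⟨by assumption, ih (by omega)⟩

lemma sc_map_not (l : List Bool) : signChanges (l.map not) = signChanges l := by
  induction l with
  | nil => rfl
  | cons a t ih =>
    cases t with
    | nil => rfl
    | cons b t2 =>
      simp only [List.map_cons, sc_cons_cons] at *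
      rw [ih]
      congr 1
      simp

lemma signList_neg (d : ℕ) (σ : Finset (Bool × Fin (d + 1)))
    (hap : ∀ i : Fin (d + 1), ¬((true, i) ∈ σ ∧ (false, i) ∈ σ)) :
    signList d (σ.image (fun p => (!p.1, p.2))) = (signList d σ).map not := by
  unfold signList
  have himg : (σ.image (fun p => (!p.1, p.2))).image Prod.snd = σ.image Prod.snd := by
    rw [Finset.image_image]; rfl
  rw [himg, List.map_map]
  apply List.map_congr_left
  intro i hi
  have hi' : i ∈ σ.image Prod.snd := (Finset.mem_sort _).mp hi
  obtain ⟨p, hp, hpi⟩ := Finset.mem_image.mp hi'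
  have hmem : ((true, i) ∈ σ.image (fun p => (!p.1, p.2))) ↔ (false, i) ∈ σ := by
    simp only [Finset.mem_image, Prod.mk.injEq]
    constructor
    · rintro ⟨⟨b, j⟩, hq, hb, hj⟩
      simp only at hb hj
      subst hj
      cases b
      · exact hq
      · simp at hb
    · intro h; exact ⟨(false, i), h, by simp, rfl⟩
  have hflip : ((false, i) ∈ σ) ↔ ¬((true, i) ∈ σ) := by
    constructor
    · intro h ht; exact hap i ⟨ht, h⟩
    · intro h
      rcases p with ⟨b, j⟩
      cases b
      · simpa [← hpi] using hp
      · exact absurd (by simpa [← hpi] using hp) h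
  by_cases h : (true, i) ∈ σ
  · have h2 : (true, i) ∉ σ.image (fun p => (!p.1, p.2)) := by
      rw [hmem, hflip]; simp [h]
    simp [muSign, h, h2]
  · have h2 : (true, i) ∈ σ.image (fun p => (!p.1, p.2)) := hmem.mpr (hflip.mpr h)
    simp [muSign, h, h2]

lemma signList_sublist (d : ℕ) (σ σ' : Finset (Bool × Fin (d + 1)))
    (hap' : ∀ i : Fin (d + 1), ¬((true, i) ∈ σ' ∧ (false, i) ∈ σ')) (hsub : σ ⊆ σ') :
    (signList d σ).Sublist (signList d σ') := by
  unfold signList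
  have h1 : (signList d σ) = ((σ.image Prod.snd).sort (· ≤ ·)).map
      (fun i => muSign d (decide ((true, i) ∈ σ'), i)) := by
    unfold signList
    apply List.map_congr_left
    intro i hi
    have hi' : i ∈ σ.image Prod.snd := (Finset.mem_sort _).mp hi
    obtain ⟨⟨b, j⟩, hp, hpi⟩ := Finset.mem_image.mp hi'
    simp only at hpi; subst hpi
    congr 2
    cases b with
    | true => simp [hp, hsub hp]
    | false =>
      have h1 : (true, j) ∉ σ' := fun ht => hap' j ⟨ht, hsub hp⟩
      have h2 : (true, j) ∉ σ := fun ht => h1 (hsub ht)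
      simp [h1, h2]
  rw [show ((σ.image Prod.snd).sort (· ≤ ·)).map
      (fun i => muSign d (decide ((true, i) ∈ σ), i)) = signList d σ from rfl, h1]
  apply List.Sublist.map
  apply List.sublist_of_subperm_of_pairwise _ (Finset.pairwise_sort _ _) (Finset.pairwise_sort _ _)
  apply List.Nodup.subperm (Finset.sort_nodup _ _)
  intro i hi
  rw [Finset.mem_sort] at hi ⊢
  exact Finset.image_subset_image hsub hi

lemma signList_ne_nil {d : ℕ} {σ : Finset (Bool × Fin (d + 1))} (hne : σ.Nonempty) :
    signList d σ ≠ [] := by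
  unfold signList
  simp only [ne_eq, List.map_eq_nil_iff]
  intro h
  have : (0:ℕ) < (σ.image Prod.snd).card := Finset.card_pos.mpr (hne.image Prod.snd)
  rw [← Finset.length_sort (· ≤ ·), h] at this
  simp at this

lemma signList_length {d : ℕ} (σ : Finset (Bool × Fin (d + 1))) :
    (signList d σ).length = (σ.image Prod.snd).card := by
  simp [signList]

lemma sort_univ_fin (n : ℕ) :
    (Finset.univ : Finset (Fin n)).sort (· ≤ ·) = List.finRange n := by
  refine (fun h p1 p2 => List.Perm.eq_of_pairwise' (r := (· ≤ ·)) p1 p2 h) ?_ ?_ ?_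
  · apply List.perm_of_nodup_nodup_toFinset_eq (Finset.sort_nodup _ _) (List.nodup_finRange _)
    rw [Finset.sort_toFinset, List.toFinset_finRange]
  · exact Finset.pairwise_sort _ _
  · exact List.Pairwise.imp le_of_lt (List.pairwise_lt_finRange _)

lemma part_one {d : ℕ} {σ : Finset (Bool × Fin (d + 1))} (hσ : BKSimplex d σ)
    (hne : σ.Nonempty)
    (hchain : (signList d σ).Chain' (· ≠ ·))
    (hcard : (σ.image Prod.snd).card = d + 1) : False := by
  set b : Fin (d + 1) → Bool := fun i => decide ((true, i) ∈ σ) with hb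
  have huniv : σ.image Prod.snd = Finset.univ :=
    Finset.eq_univ_of_card _ (by rw [hcard, Fintype.card_fin])
  have hmemboth : ∀ i : Fin (d + 1), (true, i) ∈ σ ∨ (false, i) ∈ σ := by
    intro i
    have : i ∈ σ.image Prod.snd := huniv ▸ Finset.mem_univ i
    obtain ⟨⟨bb, j⟩, hp, hj⟩ := Finset.mem_image.mp this
    simp only at hj; subst hj
    cases bb
    · exact Or.inr hp
    · exact Or.inl hp
  rw [signList, huniv, sort_univ_fin] at hchain
  unfold List.Chain' at hchain; rw [List.isChain_map, List.isChain_iff_getElem] at hchain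
  have bool_aux : ∀ x y p : Bool, ((x == p) ≠ (y == !p)) → x = y := by decide
  have hstep : ∀ n : ℕ, (hn : n < d) → b ⟨n, by omega⟩ = b ⟨n + 1, by omega⟩ := by
    intro n hn
    have hlt : n + 1 < (List.finRange (d+1)).length := by simp; omega
    have := hchain n hlt
    rw [List.getElem_finRange, List.getElem_finRange] at this
    have hq : decide ((n + 1 + 1) % 2 = 0) = !decide ((n + 1) % 2 = 0) := by
      rcases Nat.mod_two_eq_zero_or_one (n + 1) with h | h
      · have h2 : (n + 1 + 1) % 2 = 1 := by omega
        simp [h, h2]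
      · have h2 : (n + 1 + 1) % 2 = 0 := by omega
        simp [h, h2]
    simp only [muSign, Fin.cast_mk, Fin.val_mk] at this
    rw [hq] at this
    exact bool_aux _ _ _ this
  have hconst : ∀ n : ℕ, (h : n ≤ d) → b ⟨n, by omega⟩ = b ⟨0, by omega⟩ := by
    intro n
    induction n with
    | zero => intro _; rfl
    | succ m ih => intro h; rw [← hstep m (by omega)]; exact ih (by omega)
  obtain ⟨i, hi⟩ := hσ.2.1
  obtain ⟨j, hj⟩ := hσ.2.2
  have hbi : b i = false := by
    have := (hmemboth i).resolve_left hi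
    simp [hb, hi]
  have hbj : b j = true := by
    have := (hmemboth j).resolve_right hj
    simp [hb, this]
  have h1 : b i = b ⟨0, by omega⟩ := by
    have := hconst i.val (by omega)
    simpa [Fin.eta] using this
  have h2 : b j = b ⟨0, by omega⟩ := by
    have := hconst j.val (by omega)
    simpa [Fin.eta] using this
  rw [hbi] at h1; rw [hbj] at h2; rw [← h1] at h2; exact Bool.noConfusion h2


/-- The map `λ`: a simplex `σ` is sent to `s · e_k`, encoded as the pair `(s, k)`
where `s` is the sign of `μ(v₀)` and `k` is one plus the number of sign changes
in `μ(v₀), …, μ(v_{dim σ})`. -/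
def lambdaMap (d : ℕ) (σ : Finset (Bool × Fin (d + 1))) : Bool × ℕ :=
  ((signList d σ).headD true, signChanges (signList d σ) + 1)

/-- The map `λ` defines a simplicial `ℤ₂`-map `sd(B(K_{d+1})) → ∂◊^d`:
for every nonempty simplex `σ` of `B(K_{d+1})`, the index `k` of `λ(σ) = s·e_k`
lies in `{1, …, d}` (so `λ(σ)` is a vertex of `∂◊^d`); `λ` commutes with the
sign-swap involutions; and along any inclusion of simplices `σ ⊆ σ'` the images
are never antipodal vertices of `∂◊^d` (so chains of simplices, i.e. simplices of
the barycentric subdivision, are mapped to simplices of `∂◊^d`). -/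
theorem lambda_is_simplicial_Z2_map (d : ℕ) (σ : Finset (Bool × Fin (d + 1)))
    (hσ : BKSimplex d σ) (hne : σ.Nonempty) :
    (1 ≤ (lambdaMap d σ).2 ∧ (lambdaMap d σ).2 ≤ d) ∧
    (lambdaMap d (σ.image (fun p => (!p.1, p.2))) =
      (!(lambdaMap d σ).1, (lambdaMap d σ).2)) ∧
    (∀ σ' : Finset (Bool × Fin (d + 1)), BKSimplex d σ' → σ ⊆ σ' →
      ¬((lambdaMap d σ).2 = (lambdaMap d σ').2 ∧
        (lambdaMap d σ).1 ≠ (lambdaMap d σ').1)) := by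

  have hlne : signList d σ ≠ [] := signList_ne_nil hne
  refine ⟨⟨Nat.le_add_left 1 _, ?_⟩, ?_, ?_⟩
  · -- k ≤ d
    by_contra hlt
    push_neg at hlt
    have hlen := sc_lt_length hlne
    have hcard : (signList d σ).length = (σ.image Prod.snd).card := signList_length σ
    have hle : (σ.image Prod.snd).card ≤ d + 1 := by
      simpa using Finset.card_le_univ (σ.image Prod.snd)
    simp only [lambdaMap] at hlt
    have heq : signChanges (signList d σ) + 1 = (signList d σ).length := by omega
    exact part_one hσ hne (sc_eq_length heq) (by omega)
  · -- equivariance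
    have hmap := signList_neg d σ hσ.1
    simp only [lambdaMap, hmap, sc_map_not, Prod.mk.injEq]
    refine ⟨?_, trivial⟩
    cases h : signList d σ with
    | nil => exact absurd h hlne
    | cons a t => simp
  · -- monotone along inclusions
    intro σ' hσ' hsub
    rintro ⟨hk, hs⟩
    have hne' : σ'.Nonempty := hne.mono hsub
    have hlne' : signList d σ' ≠ [] := signList_ne_nil hne'
    have hsl : (signList d σ).Sublist (signList d σ') := signList_sublist d σ σ' hσ'.1 hsub
    simp only [lambdaMap] at hk hs
    obtain ⟨a, t, h1⟩ : ∃ a t, signList d σ = a :: t :=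
      List.exists_cons_of_ne_nil hlne
    obtain ⟨a', t', h2⟩ : ∃ a' t', signList d σ' = a' :: t' :=
      List.exists_cons_of_ne_nil hlne'
    rw [h1, h2] at hk hs hsl
    simp only [List.headD_cons] at hs
    have key := sc_sublist a' hsl
    rw [sc_cons_cons, sc_cons_cons, if_neg (Ne.symm hs), if_pos rfl] at key
    omega
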